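/- If 0 < h < 1/(s·c·c₃), then for every t ∈ ℝ, every Z ∈ ℝ^d, all real numbers ξ_{r,k} (r, k = 1, …, m) with S := ∑_{r,k=1}^{m} |ξ_{r,k}|, every family of drift stage values H⁽⁰⁾₁, …, H⁽⁰⁾_s with data (Z, t, h) and the corresponding diffusion stage values H⁽ᵏ⁾_i, one has for every i = 1, …, s: max_{1≤k≤m} ‖H⁽ᵏ⁾_i − Z‖ ≤ s·c₃·c·(1 + ‖Z‖)·h/(1 − s·c₃·c·h) + s·c₃·c·S + ( (‖Z‖ + s·c₃·c·h)/(1 − s·c₃·c·h) + s·c₃·c·S ) · ∑_{j=1}^{i−1} (c₃·c·s)^j · S^j. (Estimate (49) for the increments of the diffusion stages of the SRK method.) -/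

import Mathlib

set_option maxHeartbeats 1000000 in
/-- Estimate (49): bound on the increments of the diffusion stages of the SRK method. -/
theorem stmt_17 (s d m : ℕ) (hs : 0 < s) (hd : 0 < d) (hm : 0 < m)
    (c c₃ : ℝ) (hc : 0 < c) (hc₃ : 0 < c₃)
    (a : ℝ → EuclideanSpace ℝ (Fin d) → EuclideanSpace ℝ (Fin d))
    (ha : ∀ t x, ‖a t x‖ ≤ c * (1 + ‖x‖))
    (b : Fin m → ℝ → EuclideanSpace ℝ (Fin d) → EuclideanSpace ℝ (Fin d))
    (hb : ∀ k t x, ‖b k t x‖ ≤ c * (1 + ‖x‖))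
    (A0 A1 B1 : Fin s → Fin s → ℝ)
    (hA0 : ∀ i j, |A0 i j| ≤ c₃) (hA1 : ∀ i j, |A1 i j| ≤ c₃) (hB1 : ∀ i j, |B1 i j| ≤ c₃)
    (hB1tri : ∀ i j, i ≤ j → B1 i j = 0)
    (c0 c1 : Fin s → ℝ) (hc0 : ∀ j, |c0 j| ≤ c₃) (hc1 : ∀ j, |c1 j| ≤ c₃)
    (h : ℝ) (hh : 0 < h) (hh' : h < 1 / ((s : ℝ) * c * c₃))
    (t : ℝ) (Z : EuclideanSpace ℝ (Fin d))
    (ξ : Fin m → Fin m → ℝ)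
    (H0 : Fin s → EuclideanSpace ℝ (Fin d))
    (hH0 : ∀ i, H0 i = Z + h • ∑ j, A0 i j • a (t + c0 j * h) (H0 j))
    (H : Fin m → Fin s → EuclideanSpace ℝ (Fin d))
    (hH : ∀ k i, H k i = Z + h • (∑ j, A1 i j • a (t + c0 j * h) (H0 j))
      + ∑ r, ∑ j ∈ Finset.univ.filter (fun j => j < i),
          (B1 i j * ξ r k) • b r (t + c1 j * h) (H r j)) :
    ∀ i k, ‖H k i - Z‖ ≤
      (s : ℝ) * c₃ * c * (1 + ‖Z‖) * h / (1 - (s : ℝ) * c₃ * c * h)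
        + (s : ℝ) * c₃ * c * (∑ r, ∑ l, |ξ r l|)
        + ((‖Z‖ + (s : ℝ) * c₃ * c * h) / (1 - (s : ℝ) * c₃ * c * h)
            + (s : ℝ) * c₃ * c * ∑ r, ∑ l, |ξ r l|)
          * ∑ j ∈ Finset.Icc 1 (i : ℕ),
              (c₃ * c * (s : ℝ)) ^ j * (∑ r, ∑ l, |ξ r l|) ^ j := by
  -- Notation
  set S : ℝ := ∑ r, ∑ l, |ξ r l| with hSdef
  have hS0 : 0 ≤ S := Finset.sum_nonneg fun r _ =>
    Finset.sum_nonneg fun l _ => abs_nonneg _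
  have hs' : (0:ℝ) < (s:ℝ) := by exact_mod_cast hs
  set α : ℝ := (s:ℝ) * c₃ * c * h with hαdef
  have hα0 : 0 < α := by positivity
  have hα1 : α < 1 := by
    have h1 : (0:ℝ) < (s:ℝ) * c * c₃ := by positivity
    have := (lt_div_iff₀ h1).mp hh'
    nlinarith
  have h1α : 0 < 1 - α := by linarith
  set β : ℝ := (s:ℝ) * c₃ * c * S with hβdef
  have hβ0 : 0 ≤ β := by positivity
  set M : ℝ := (‖Z‖ + α) / (1 - α) with hMdef
  have hM0 : 0 ≤ M := by positivity
  set W : ℝ := α * (1 + ‖Z‖) / (1 - α) with hWdef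
  have hW0 : 0 ≤ W := by positivity
  have hMA : ‖Z‖ + W = M := by
    rw [hWdef, hMdef]
    field_simp
    ring
  -- Sum of ξ's in a fixed column is at most S
  have hξcol : ∀ k : Fin m, ∑ r, |ξ r k| ≤ S := by
    intro k
    rw [hSdef]
    refine Finset.sum_le_sum fun r _ => ?_
    exact Finset.single_le_sum (f := fun l => |ξ r l|)
      (fun l _ => abs_nonneg _) (Finset.mem_univ k)
  -- Bound on the drift stages
  haveI : Nonempty (Fin s) := ⟨⟨0, hs⟩⟩
  have hdrift : ∀ j : Fin s, ‖H0 j‖ ≤ M := by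
    have hne : (Finset.univ : Finset (Fin s)).Nonempty := Finset.univ_nonempty
    obtain ⟨i0, -, hi0⟩ := Finset.exists_mem_eq_sup' hne (fun j => ‖H0 j‖)
    have hle0 : ∀ j : Fin s, ‖H0 j‖ ≤ ‖H0 i0‖ := fun j =>
      hi0 ▸ Finset.le_sup' (fun j => ‖H0 j‖) (Finset.mem_univ j)
    set M0 : ℝ := ‖H0 i0‖ with hM0def
    have hM00 : 0 ≤ M0 := norm_nonneg _
    have hbound : M0 ≤ ‖Z‖ + α * (1 + M0) := by
      rw [hM0def]
      nth_rewrite 1 [hH0 i0]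
      calc ‖Z + h • ∑ j, A0 i0 j • a (t + c0 j * h) (H0 j)‖
          ≤ ‖Z‖ + ‖h • ∑ j, A0 i0 j • a (t + c0 j * h) (H0 j)‖ := norm_add_le _ _
        _ = ‖Z‖ + h * ‖∑ j, A0 i0 j • a (t + c0 j * h) (H0 j)‖ := by
            rw [norm_smul, Real.norm_eq_abs, abs_of_pos hh]
        _ ≤ ‖Z‖ + h * ∑ j, c₃ * (c * (1 + M0)) := by
            gcongr
            calc ‖∑ j, A0 i0 j • a (t + c0 j * h) (H0 j)‖
                ≤ ∑ j, ‖A0 i0 j • a (t + c0 j * h) (H0 j)‖ := norm_sum_le _ _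
              _ ≤ ∑ j, c₃ * (c * (1 + M0)) := by
                  refine Finset.sum_le_sum fun j _ => ?_
                  rw [norm_smul, Real.norm_eq_abs]
                  have h1 : ‖a (t + c0 j * h) (H0 j)‖ ≤ c * (1 + M0) := by
                    refine le_trans (ha _ _) ?_
                    have := hle0 j
                    nlinarith
                  have h2 : (0:ℝ) ≤ c * (1 + M0) := by positivity
                  exact mul_le_mul (hA0 i0 j) h1 (norm_nonneg _) hc₃.le
        _ = ‖Z‖ + α * (1 + M0) := by
            rw [Finset.sum_const, Finset.card_univ, Fintype.card_fin, nsmul_eq_mul, hαdef]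
            ring
    intro j
    refine le_trans (hle0 j) ?_
    rw [hMdef, le_div_iff₀ h1α]
    nlinarith
  -- consequence: 1 + ‖H0 j‖ ≤ (1+‖Z‖)/(1-α)
  have hdrift' : ∀ j : Fin s, 1 + ‖H0 j‖ ≤ (1 + ‖Z‖) / (1 - α) := by
    intro j
    have := hdrift j
    rw [hMdef] at this
    rw [le_div_iff₀ h1α]
    rw [le_div_iff₀ h1α] at this
    nlinarith
  -- the first (drift) part of each diffusion stage
  have hdriftpart : ∀ i : Fin s,
      h * ‖∑ j, A1 i j • a (t + c0 j * h) (H0 j)‖ ≤ W := by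
    intro i
    have h1 : ‖∑ j, A1 i j • a (t + c0 j * h) (H0 j)‖
        ≤ ∑ j : Fin s, c₃ * (c * ((1 + ‖Z‖) / (1 - α))) := by
      refine le_trans (norm_sum_le _ _) (Finset.sum_le_sum fun j _ => ?_)
      rw [norm_smul, Real.norm_eq_abs]
      have h1 : ‖a (t + c0 j * h) (H0 j)‖ ≤ c * ((1 + ‖Z‖) / (1 - α)) := by
        refine le_trans (ha _ _) ?_
        have := hdrift' j
        nlinarith
      exact mul_le_mul (hA1 i j) h1 (norm_nonneg _) hc₃.le
    rw [Finset.sum_const, Finset.card_univ, Fintype.card_fin, nsmul_eq_mul] at h1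
    calc h * ‖∑ j, A1 i j • a (t + c0 j * h) (H0 j)‖
        ≤ h * ((s:ℝ) * (c₃ * (c * ((1 + ‖Z‖) / (1 - α))))) := by gcongr
      _ = W := by rw [hWdef, hαdef]; ring
  -- geometric sum identity
  have hIcc : ∀ n : ℕ, ∑ j ∈ Finset.Icc 1 n, β^j = β * ∑ j ∈ Finset.range n, β^j := by
    intro n
    rw [← Finset.Ico_add_one_right_eq_Icc, Finset.sum_Ico_eq_sum_range, Finset.mul_sum]
    simp only [Nat.add_sub_cancel]
    refine Finset.sum_congr rfl fun i _ => by rw [pow_add, pow_one]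
  have hgeom : ∀ n : ℕ, ∑ j ∈ Finset.Icc 1 (n+1), β^j
      = β + β * ∑ j ∈ Finset.Icc 1 n, β^j := by
    intro n
    rw [hIcc (n+1), hIcc n, geom_sum_succ]
    ring
  -- target function
  set T : ℕ → ℝ := fun n => W + β + (M + β) * ∑ j ∈ Finset.Icc 1 n, β^j with hTdef
  have hgti : ∀ n : ℕ, 0 ≤ ∑ j ∈ Finset.Icc 1 n, β^j :=
    fun n => Finset.sum_nonneg fun j _ => pow_nonneg hβ0 j
  have hT0 : ∀ n, 0 ≤ T n := by
    intro n
    have := hgti n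
    have : 0 ≤ (M + β) * ∑ j ∈ Finset.Icc 1 n, β^j := by positivity
    rw [hTdef]; dsimp only; linarith
  have hTmono : ∀ p q : ℕ, p ≤ q → T p ≤ T q := by
    intro p q hpq
    rw [hTdef]; dsimp only
    have hsub : ∑ j ∈ Finset.Icc 1 p, β^j ≤ ∑ j ∈ Finset.Icc 1 q, β^j := by
      refine Finset.sum_le_sum_of_subset_of_nonneg (Finset.Icc_subset_Icc_right hpq)
        fun j _ _ => pow_nonneg hβ0 j
    have hMβ : 0 ≤ M + β := by positivity
    nlinarith
  -- Main claim by strong induction on i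
  have key : ∀ n : ℕ, ∀ i : Fin s, (i:ℕ) = n → ∀ k, ‖H k i - Z‖ ≤ T n := by
    intro n
    induction n using Nat.strong_induction_on with
    | _ n IH =>
      intro i hi k
      have hstart : ‖H k i - Z‖ ≤
          h * ‖∑ j, A1 i j • a (t + c0 j * h) (H0 j)‖ +
          ‖∑ r, ∑ j ∈ Finset.univ.filter (fun j => j < i),
            (B1 i j * ξ r k) • b r (t + c1 j * h) (H r j)‖ := by
        rw [hH k i]
        have : Z + h • (∑ j, A1 i j • a (t + c0 j * h) (H0 j))
            + (∑ r, ∑ j ∈ Finset.univ.filter (fun j => j < i),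
              (B1 i j * ξ r k) • b r (t + c1 j * h) (H r j)) - Z
            = h • (∑ j, A1 i j • a (t + c0 j * h) (H0 j))
            + (∑ r, ∑ j ∈ Finset.univ.filter (fun j => j < i),
              (B1 i j * ξ r k) • b r (t + c1 j * h) (H r j)) := by abel
        rw [this]
        refine le_trans (norm_add_le _ _) ?_
        rw [norm_smul, Real.norm_eq_abs, abs_of_pos hh]
      match n, hi with
      | 0, hi =>
        have hempty : Finset.univ.filter (fun j => j < i) = ∅ := by
          ext j
          simp only [Finset.mem_filter, Finset.mem_univ, true_and, Finset.notMem_empty,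
            iff_false]
          intro hj
          have := Fin.lt_def.mp hj
          omega
        rw [hempty] at hstart
        simp only [Finset.sum_empty, Finset.sum_const_zero, norm_zero, add_zero] at hstart
        have := hdriftpart i
        have h1 := hgti 0
        have h2 : 0 ≤ (M + β) * ∑ j ∈ Finset.Icc 1 0, β^j := by positivity
        rw [hTdef]; dsimp only
        linarith
      | (p+1), hi =>
        -- bound the diffusion part
        have hB : 0 ≤ 1 + ‖Z‖ + T p := by
          have := hT0 p; positivity
        have hdiff : ‖∑ r, ∑ j ∈ Finset.univ.filter (fun j => j < i),
            (B1 i j * ξ r k) • b r (t + c1 j * h) (H r j)‖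
            ≤ β * (1 + ‖Z‖ + T p) := by
          have hterm : ∀ r : Fin m, ∀ j ∈ Finset.univ.filter (fun j => j < i),
              ‖(B1 i j * ξ r k) • b r (t + c1 j * h) (H r j)‖
              ≤ c₃ * |ξ r k| * (c * (1 + ‖Z‖ + T p)) := by
            intro r j hj
            simp only [Finset.mem_filter, Finset.mem_univ, true_and] at hj
            have hjp : (j:ℕ) < p + 1 := by
              have := Fin.lt_def.mp hj; omega
            have hHrj : ‖H r j - Z‖ ≤ T p := by
              refine le_trans (IH (j:ℕ) hjp j rfl r) (hTmono _ _ (by omega))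
            have hnb : ‖b r (t + c1 j * h) (H r j)‖ ≤ c * (1 + ‖Z‖ + T p) := by
              refine le_trans (hb r _ _) ?_
              have h3 : ‖H r j‖ ≤ ‖Z‖ + T p := by
                calc ‖H r j‖ = ‖H r j - Z + Z‖ := by rw [sub_add_cancel]
                  _ ≤ ‖H r j - Z‖ + ‖Z‖ := norm_add_le _ _
                  _ ≤ T p + ‖Z‖ := by linarith
                  _ = ‖Z‖ + T p := by ring
              nlinarith
            rw [norm_smul, Real.norm_eq_abs, abs_mul]
            have h4 : |B1 i j| * |ξ r k| ≤ c₃ * |ξ r k| :=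
              mul_le_mul_of_nonneg_right (hB1 i j) (abs_nonneg _)
            have h5 : 0 ≤ c * (1 + ‖Z‖ + T p) := by positivity
            exact mul_le_mul h4 hnb (norm_nonneg _) (by positivity)
          calc ‖∑ r, ∑ j ∈ Finset.univ.filter (fun j => j < i),
                (B1 i j * ξ r k) • b r (t + c1 j * h) (H r j)‖
              ≤ ∑ r, ‖∑ j ∈ Finset.univ.filter (fun j => j < i),
                (B1 i j * ξ r k) • b r (t + c1 j * h) (H r j)‖ := norm_sum_le _ _
            _ ≤ ∑ r : Fin m, (s:ℝ) * (c₃ * |ξ r k| * (c * (1 + ‖Z‖ + T p))) := by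
                refine Finset.sum_le_sum fun r _ => ?_
                refine le_trans (norm_sum_le _ _) ?_
                refine le_trans (Finset.sum_le_card_nsmul _ _ _ (hterm r)) ?_
                rw [nsmul_eq_mul]
                have hcard : ((Finset.univ.filter (fun j => j < i)).card : ℝ) ≤ (s:ℝ) := by
                  exact_mod_cast le_trans (Finset.card_filter_le _ _)
                    (le_of_eq (by simp))
                have h6 : 0 ≤ c₃ * |ξ r k| * (c * (1 + ‖Z‖ + T p)) := by positivity
                exact mul_le_mul_of_nonneg_right hcard h6
            _ = (s:ℝ) * c₃ * (c * (1 + ‖Z‖ + T p)) * ∑ r, |ξ r k| := by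
                rw [Finset.mul_sum]
                refine Finset.sum_congr rfl fun r _ => by ring
            _ ≤ (s:ℝ) * c₃ * (c * (1 + ‖Z‖ + T p)) * S := by
                have h7 : 0 ≤ (s:ℝ) * c₃ * (c * (1 + ‖Z‖ + T p)) := by positivity
                exact mul_le_mul_of_nonneg_left (hξcol k) h7
            _ = β * (1 + ‖Z‖ + T p) := by rw [hβdef]; ring
        -- combine and close with the algebraic identity
        have hfinal : W + β * (1 + ‖Z‖ + T p) = T (p+1) := by
          rw [hTdef]; dsimp only
          rw [hgeom p]
          have : M = ‖Z‖ + W := hMA.symm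
          rw [this]
          ring
        have := hdriftpart i
        rw [← hfinal]
        linarith
  intro i k
  have hkey := key (i:ℕ) i rfl k
  rw [hTdef] at hkey; dsimp only at hkey
  refine le_trans hkey (le_of_eq ?_)
  have hsum : ∑ j ∈ Finset.Icc 1 (i:ℕ), β^j
      = ∑ j ∈ Finset.Icc 1 (i:ℕ), (c₃ * c * (s:ℝ))^j * S^j := by
    refine Finset.sum_congr rfl fun j _ => ?_
    rw [← mul_pow, hβdef]
    ring_nf
  rw [hsum, hWdef, hMdef, hβdef, hαdef]
  ring
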